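/- For the piecewise constant curve σ_x:[0,1]→X with σ_x(t)=x_i for t∈[i/2^N,(i+1)/2^N), and for every h with 2^{-N} ≤ h < 1 one has ∫_0^{1−h} ψ( d(σ_x(t+h),σ_x(t)) / (2h) ) dt ≤ Σ_{j=0}^{2^N−1} 2^{−N} ψ( 2^N d(x_{j+1}, x_j) ). -/

import Mathlib

open MeasureTheory Filter Set ENNReal NNReal Topology

noncomputable section
set_option maxHeartbeats 1000000

/-- Luxemburg (Orlicz) norm of a nonnegative function. -/
def luxNorm (ψ : ℝ≥0∞ → ℝ≥0∞) {Ω : Type*} [MeasurableSpace Ω]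
    (ν : Measure Ω) (u : Ω → ℝ≥0∞) : ℝ≥0∞ :=
  sInf {l : ℝ≥0∞ | 0 < l ∧ ∫⁻ x, ψ (u x / l) ∂ν ≤ 1}

/-- Standard assumptions on the Orlicz function `ψ`: convex, lower semicontinuous,
non-decreasing, `ψ 0 = 0`, `ψ x → ∞` as `x → ∞`. -/
structure IsOrlicz (ψ : ℝ≥0∞ → ℝ≥0∞) : Prop where
  convex : ∀ a b x y : ℝ≥0∞, a + b = 1 → ψ (a * x + b * y) ≤ a * ψ x + b * ψ y
  lsc : LowerSemicontinuous ψ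
  mono : Monotone ψ
  zero : ψ 0 = 0
  tendsto_top : ∀ C : ℝ≥0∞, ∃ M : ℝ≥0∞, ∀ x, M ≤ x → C ≤ ψ x

/-- Superlinearity at infinity: `ψ x / x → ∞`. -/
def Superlinear (ψ : ℝ≥0∞ → ℝ≥0∞) : Prop :=
  ∀ C : ℝ≥0, ∃ M : ℝ≥0, ∀ x : ℝ≥0, M ≤ x → (C : ℝ≥0∞) * x ≤ ψ x

/-- Null right derivative at `0`: `ψ x / x → 0` as `x → 0⁺`. -/
def FlatAtZero (ψ : ℝ≥0∞ → ℝ≥0∞) : Prop :=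
  ∀ ε : ℝ≥0, 0 < ε → ∃ δ : ℝ≥0, 0 < δ ∧ ∀ x : ℝ≥0, 0 < x → x ≤ δ → ψ x ≤ (ε : ℝ≥0∞) * x

/-- Legendre conjugate `ψ*(y) = sup_{x ≥ 0} (x y - ψ x)`. -/
def conjOrlicz (ψ : ℝ≥0∞ → ℝ≥0∞) (y : ℝ≥0∞) : ℝ≥0∞ :=
  ⨆ x : ℝ≥0, (x : ℝ≥0∞) * y - ψ x

/-- Generalized inverse of `ψ` (with the convention of the paper). -/
def psiInv (ψ : ℝ≥0∞ → ℝ≥0∞) (s : ℝ≥0∞) : ℝ≥0∞ :=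
  sSup {r : ℝ≥0∞ | ψ r ≤ s}

/-- `(X, τ, d)` is an extended Polish space: `d` is an extended distance, complete,
`d`-convergence implies `τ`-convergence, and `d` is `τ × τ` lower semicontinuous. -/
structure IsExtPolish (X : Type*) [TopologicalSpace X] (d : X → X → ℝ≥0∞) : Prop where
  symm : ∀ x y, d x y = d y x
  eq_zero_iff : ∀ x y, d x y = 0 ↔ x = y
  triangle : ∀ x y z, d x z ≤ d x y + d y z
  complete : ∀ u : ℕ → X,
    (∀ ε : ℝ≥0∞, 0 < ε → ∃ N, ∀ m n, N ≤ m → N ≤ n → d (u m) (u n) < ε) →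
    ∃ x, Tendsto (fun n => d (u n) x) atTop (𝓝 0)
  compat : ∀ (u : ℕ → X) (x : X),
    Tendsto (fun n => d (u n) x) atTop (𝓝 0) → Tendsto u atTop (𝓝 x)
  lsc : LowerSemicontinuous fun p : X × X => d p.1 p.2

/-- Admissible transport plans between `μ` and `ν`. -/
def Couplings {X : Type*} [MeasurableSpace X] (μ ν : Measure X) : Set (Measure (X × X)) :=
  {γ | IsProbabilityMeasure γ ∧ γ.map Prod.fst = μ ∧ γ.map Prod.snd = ν}

/-- The Wasserstein–Orlicz extended distance. -/
def Wass (ψ : ℝ≥0∞ → ℝ≥0∞) {X : Type*} [MeasurableSpace X] (d : X → X → ℝ≥0∞)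
    (μ ν : Measure X) : ℝ≥0∞ :=
  ⨅ γ ∈ Couplings μ ν, luxNorm ψ γ (fun p : X × X => d p.1 p.2)

/-- Absolutely continuous curve with finite `L^ψ` energy with respect to the
extended distance `ρ`, on the interval `[a, b]`. -/
def IsACpsi (ψ : ℝ≥0∞ → ℝ≥0∞) {A : Type*} (ρ : A → A → ℝ≥0∞)
    (a b : ℝ) (u : ℝ → A) : Prop :=
  ∃ m : ℝ → ℝ≥0∞, luxNorm ψ (volume.restrict (Set.Icc a b)) m < ⊤ ∧
    ∀ s t : ℝ, a ≤ s → s ≤ t → t ≤ b → ρ (u s) (u t) ≤ ∫⁻ r in Set.Icc s t, m r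

/-- The metric derivative of the curve `u` (with values in a space with extended
distance `ρ`) at time `t` within the interval `I` equals `L`. -/
def HasMDeriv {A : Type*} (ρ : A → A → ℝ≥0∞) (u : ℝ → A) (I : Set ℝ) (t : ℝ)
    (L : ℝ≥0∞) : Prop :=
  Tendsto (fun h : ℝ => ρ (u (t + h)) (u t) / ENNReal.ofReal |h|)
    (𝓝[{h : ℝ | h ≠ 0 ∧ t + h ∈ I}] 0) (𝓝 L)

/-- The support of a Borel measure. -/
def measSupport {Y : Type*} [TopologicalSpace Y] [MeasurableSpace Y] (μ : Measure Y) : Set Y :=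
  {y | ∀ U ∈ 𝓝 y, 0 < μ U}

/-- Orlicz estimate of the difference quotients of a piecewise constant
curve. -/

lemma chain_le {X : Type*} (d : X → X → ℝ≥0∞) (hrefl : ∀ x, d x x = 0)
    (htri : ∀ x y z, d x z ≤ d x y + d y z) (y : ℕ → X) (i : ℕ) :
    ∀ j, i ≤ j → d (y i) (y j) ≤ ∑ l ∈ Finset.Ico i j, d (y l) (y (l+1)) := by
  intro j hij
  induction j, hij using Nat.le_induction with
  | base => simp [hrefl]
  | succ j hij ih =>
    calc d (y i) (y (j+1)) ≤ d (y i) (y j) + d (y j) (y (j+1)) := htri _ _ _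
      _ ≤ (∑ l ∈ Finset.Ico i j, d (y l) (y (l+1))) + d (y j) (y (j+1)) := by
          exact add_le_add ih le_rfl
      _ = ∑ l ∈ Finset.Ico i (j+1), d (y l) (y (l+1)) := by
          rw [Finset.sum_Ico_succ_top hij]

lemma ennreal_jensen (ψ : ℝ≥0∞ → ℝ≥0∞)
    (hc : ∀ a b x y : ℝ≥0∞, a + b = 1 → ψ (a*x+b*y) ≤ a*ψ x + b*ψ y) (h0 : ψ 0 = 0)
    {ι : Type*} (s : Finset ι) (w a : ι → ℝ≥0∞) (hw : ∑ l ∈ s, w l ≤ 1) :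
    ψ (∑ l ∈ s, w l * a l) ≤ ∑ l ∈ s, w l * ψ (a l) := by
  induction s using Finset.cons_induction generalizing w with
  | empty => simpa using h0.le
  | cons i s his ih =>
    rw [Finset.sum_cons] at hw ⊢
    rw [Finset.sum_cons]
    have hwi : w i ≤ 1 := le_trans (le_add_right le_rfl) hw
    set b := 1 - w i with hb
    have hab : w i + b = 1 := by
      rw [hb, add_tsub_cancel_of_le hwi]
    have hWb : ∑ l ∈ s, w l ≤ b := by
      have hne : w i ≠ ⊤ := (hwi.trans_lt (by norm_num)).ne
      exact (ENNReal.add_le_add_iff_left hne).mp (hw.trans_eq hab.symm)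
    by_cases hbz : b = 0
    · have hW : ∑ l ∈ s, w l = 0 := le_antisymm (hWb.trans_eq hbz) zero_le
      have hz : ∀ l ∈ s, w l = 0 := fun l hl => Finset.sum_eq_zero_iff.mp hW l hl
      have hR : ∑ l ∈ s, w l * a l = 0 := Finset.sum_eq_zero fun l hl => by simp [hz l hl]
      have hR' : ∑ l ∈ s, w l * ψ (a l) = 0 := Finset.sum_eq_zero fun l hl => by simp [hz l hl]
      calc ψ (w i * a i + ∑ l ∈ s, w l * a l) = ψ (w i * a i + b * 0) := by
            rw [hR, hbz]; ring_nf
        _ ≤ w i * ψ (a i) + b * ψ 0 := hc _ _ _ _ hab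
        _ = w i * ψ (a i) + ∑ l ∈ s, w l * ψ (a l) := by rw [h0, hR', mul_zero]
    · have hbtop : b ≠ ⊤ := by
        intro hTop; rw [hTop] at hab; simp at hab
      have hsum : ∑ l ∈ s, w l / b ≤ 1 := by
        have : ∑ l ∈ s, w l / b = (∑ l ∈ s, w l) / b := by
          simp [div_eq_mul_inv, Finset.sum_mul]
        rw [this]
        exact le_trans (ENNReal.div_le_div_right hWb b) ENNReal.div_self_le_one
      have key := ih (fun l => w l / b) hsum
      have hR : w i * a i + ∑ l ∈ s, w l * a l
          = w i * a i + b * (∑ l ∈ s, (w l / b) * a l) := by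
        congr 1
        rw [Finset.mul_sum]
        apply Finset.sum_congr rfl
        intro l hl
        rw [← mul_assoc, ENNReal.mul_div_cancel hbz hbtop]
      calc ψ (w i * a i + ∑ l ∈ s, w l * a l)
          ≤ w i * ψ (a i) + b * ψ (∑ l ∈ s, (w l / b) * a l) := by
            rw [hR]; exact hc _ _ _ _ hab
        _ ≤ w i * ψ (a i) + b * ∑ l ∈ s, (w l / b) * ψ (a l) := by gcongr
        _ = w i * ψ (a i) + ∑ l ∈ s, w l * ψ (a l) := by
            congr 1
            rw [Finset.mul_sum]
            apply Finset.sum_congr rfl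
            intro l hl
            rw [← mul_assoc, ENNReal.mul_div_cancel hbz hbtop]

lemma orlicz_aux {X : Type*} (d : X → X → ℝ≥0∞)
    (hsymm : ∀ x y, d x y = d y x) (hrefl : ∀ x, d x x = 0)
    (htri : ∀ x y z, d x z ≤ d x y + d y z)
    (ψ : ℝ≥0∞ → ℝ≥0∞) (hψ : IsOrlicz ψ)
    (n : ℕ) (hn1 : 1 ≤ n) (x : Fin (n + 1) → X) (σ : ℝ → X)
    (hσ : ∀ i : Fin n, ∀ t ∈ Ico (((i : ℕ) : ℝ) / (n:ℝ)) ((((i : ℕ) : ℝ) + 1) / (n:ℝ)),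
      σ t = x i.castSucc)
    (h : ℝ) (hh1 : ((n:ℝ))⁻¹ ≤ h) (hh2 : h < 1) :
    ∫⁻ t in Icc (0 : ℝ) (1 - h), ψ (d (σ (t + h)) (σ t) / ENNReal.ofReal (2 * h)) ≤
      ∑ j : Fin n, ((n : ℝ≥0∞))⁻¹ * ψ ((n : ℝ≥0∞) * d (x j.succ) (x j.castSucc)) := by
  classical
  have hnpos : (0:ℝ) < (n:ℝ) := by exact_mod_cast hn1
  have hpos : 0 < h := lt_of_lt_of_le (by positivity) hh1
  have hnh : 1 ≤ (n:ℝ) * h := by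
    calc (1:ℝ) = (n:ℝ) * (n:ℝ)⁻¹ := by field_simp
      _ ≤ (n:ℝ) * h := by gcongr
  set k : ℕ := Nat.floor ((n:ℝ) * h) with hk
  have hk1 : 1 ≤ k := Nat.le_floor (by exact_mod_cast hnh)
  have hkle : (k:ℝ) ≤ (n:ℝ) * h := Nat.floor_le (by positivity)
  have hklt : (n:ℝ) * h < (k:ℝ) + 1 := Nat.lt_floor_add_one _
  have hk1R : (1:ℝ) ≤ (k:ℝ) := by exact_mod_cast hk1
  have h2k : (n:ℝ) * h < 2 * (k:ℝ) := by linarith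
  set m : ℝ≥0∞ := ((n:ℕ) : ℝ≥0∞) with hm
  set c : ℝ≥0∞ := ((2*k : ℕ) : ℝ≥0∞)⁻¹ with hc
  have h2k0 : ((2*k:ℕ):ℝ≥0∞) ≠ 0 := by
    exact_mod_cast (by omega : (2*k:ℕ) ≠ 0)
  have h2ktop : ((2*k:ℕ):ℝ≥0∞) ≠ ⊤ := ENNReal.natCast_ne_top _
  have hm0 : m ≠ 0 := by
    rw [hm]; exact_mod_cast (by positivity : (0:ℕ) < n).ne'
  have hmtop : m ≠ ⊤ := ENNReal.natCast_ne_top _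
  set D : Fin n → ℝ≥0∞ := fun l => ψ (m * d (x l.succ) (x l.castSucc)) with hD
  have hyval : ∀ m' : ℕ, min m' n < n + 1 := fun m' => Nat.lt_succ_of_le (min_le_right _ _)
  set y : ℕ → X := fun m' => x ⟨min m' n, hyval m'⟩ with hy
  -- values of σ
  have hσ' : ∀ t : ℝ, 0 ≤ t → t < 1 → σ t = y (Nat.floor ((n:ℝ) * t)) := by
    intro t ht0 ht1
    have hnt0 : 0 ≤ (n:ℝ) * t := by positivity
    have hflt : Nat.floor ((n:ℝ)*t) < n := by
      rw [Nat.floor_lt hnt0]; nlinarith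
    set i := Nat.floor ((n:ℝ)*t) with hi
    have hile : (i:ℝ) ≤ (n:ℝ)*t := Nat.floor_le hnt0
    have hilt : (n:ℝ)*t < (i:ℝ) + 1 := Nat.lt_floor_add_one _
    have h1 : (((⟨i, hflt⟩ : Fin n) : ℕ) : ℝ) / (n:ℝ) ≤ t := by
      rw [div_le_iff₀ hnpos]
      show (i:ℝ) ≤ t * (n:ℝ)
      nlinarith
    have h2 : t < ((((⟨i, hflt⟩ : Fin n) : ℕ) : ℝ) + 1) / (n:ℝ) := by
      rw [lt_div_iff₀ hnpos]
      show t * (n:ℝ) < (i:ℝ) + 1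
      nlinarith
    rw [hσ ⟨i, hflt⟩ t ⟨h1, h2⟩]
    simp only [hy]
    exact congrArg x (Fin.ext (by simp [Nat.min_eq_left hflt.le]))
  -- identify chain endpoints with x's
  have hyx1 : ∀ l : Fin n, x l.castSucc = y (l:ℕ) := by
    intro l
    simp only [hy]
    exact congrArg x (Fin.ext (by simp [Nat.min_eq_left l.isLt.le]))
  have hyx2 : ∀ l : Fin n, x l.succ = y ((l:ℕ)+1) := by
    intro l
    simp only [hy]
    exact congrArg x (Fin.ext (by simp [Nat.min_eq_left (Nat.succ_le_of_lt l.isLt)]))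
  set S : Fin n → Set ℝ := fun l => Ico ((((l:ℕ):ℝ)+1)/(n:ℝ) - h) ((((l:ℕ):ℝ)+1)/(n:ℝ)) with hS
  set G : ℝ → ℝ≥0∞ := fun t => ∑ l : Fin n, (S l).indicator (fun _ => c * D l) t with hG
  have hGmeas : Measurable G := by
    apply Finset.measurable_sum
    intro l _
    exact measurable_const.indicator measurableSet_Ico
  -- inverse estimate
  have hinv : (ENNReal.ofReal (2*h))⁻¹ ≤ c * m := by
    have h1 : ((2*k:ℕ):ℝ≥0∞) / m ≤ ENNReal.ofReal (2*h) := by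
      calc ((2*k:ℕ):ℝ≥0∞)/m
          = ENNReal.ofReal ((2*k:ℕ):ℝ) / ENNReal.ofReal ((n:ℕ):ℝ) := by
            rw [ENNReal.ofReal_natCast, ENNReal.ofReal_natCast, hm]
        _ = ENNReal.ofReal (((2*k:ℕ):ℝ)/((n:ℕ):ℝ)) := (ENNReal.ofReal_div_of_pos hnpos).symm
        _ ≤ ENNReal.ofReal (2*h) := by
            apply ENNReal.ofReal_le_ofReal
            rw [div_le_iff₀ hnpos]; push_cast; nlinarith
    calc (ENNReal.ofReal (2*h))⁻¹ ≤ (((2*k:ℕ):ℝ≥0∞) / m)⁻¹ := by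
          exact ENNReal.inv_le_inv.mpr h1
      _ = m / ((2*k:ℕ):ℝ≥0∞) := ENNReal.inv_div (Or.inr h2ktop) (Or.inr h2k0)
      _ = c * m := by rw [div_eq_mul_inv, mul_comm, hc]
  -- pointwise estimate
  have stepA : ∀ t ∈ Ico (0:ℝ) (1-h),
      ψ (d (σ (t+h)) (σ t) / ENNReal.ofReal (2*h)) ≤ G t := by
    rintro t ⟨ht0, ht1⟩
    have hth1 : t + h < 1 := by linarith
    have hth0 : 0 ≤ t + h := by linarith
    set i := Nat.floor ((n:ℝ)*t) with hi
    set j := Nat.floor ((n:ℝ)*(t+h)) with hj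
    have hjlt : j < n := by rw [hj, Nat.floor_lt (by positivity)]; nlinarith
    have hij : i ≤ j := Nat.floor_le_floor (by nlinarith)
    have hile : (i:ℝ) ≤ (n:ℝ)*t := Nat.floor_le (by positivity)
    have hilt : (n:ℝ)*t < (i:ℝ) + 1 := Nat.lt_floor_add_one _
    have hjle : (j:ℝ) ≤ (n:ℝ)*(t+h) := Nat.floor_le (by positivity)
    have hjik : j ≤ i + 2*k := by
      have hr : (j:ℝ) < (i:ℝ) + (k:ℝ) + 2 := by nlinarith
      have hr' : j < i + k + 2 := by exact_mod_cast hr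
      omega
    rw [hσ' t ht0 (by linarith), hσ' (t+h) hth0 hth1, ← hi, ← hj]
    have hchain : d (y j) (y i) ≤ ∑ l ∈ Finset.Ico i j, d (y (l+1)) (y l) := by
      rw [hsymm]
      refine (chain_le d hrefl htri y i j hij).trans (le_of_eq ?_)
      exact Finset.sum_congr rfl fun l _ => hsymm _ _
    have hquot : d (y j) (y i) / ENNReal.ofReal (2*h)
        ≤ ∑ l ∈ Finset.Ico i j, c * (m * d (y (l+1)) (y l)) := by
      calc d (y j) (y i) / ENNReal.ofReal (2*h)
          ≤ (∑ l ∈ Finset.Ico i j, d (y (l+1)) (y l)) / ENNReal.ofReal (2*h) :=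
            ENNReal.div_le_div_right hchain _
        _ = ∑ l ∈ Finset.Ico i j, d (y (l+1)) (y l) * (ENNReal.ofReal (2*h))⁻¹ := by
            rw [div_eq_mul_inv, Finset.sum_mul]
        _ ≤ ∑ l ∈ Finset.Ico i j, c * (m * d (y (l+1)) (y l)) := by
            apply Finset.sum_le_sum
            intro l _
            calc d (y (l+1)) (y l) * (ENNReal.ofReal (2*h))⁻¹
                ≤ d (y (l+1)) (y l) * (c * m) := by gcongr
              _ = c * (m * d (y (l+1)) (y l)) := by ring
    have hwsum : ∑ _l ∈ Finset.Ico i j, c ≤ 1 := by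
      rw [Finset.sum_const, Nat.card_Ico, nsmul_eq_mul, hc]
      calc ((j-i:ℕ):ℝ≥0∞) * ((2*k:ℕ):ℝ≥0∞)⁻¹
          ≤ ((2*k:ℕ):ℝ≥0∞) * ((2*k:ℕ):ℝ≥0∞)⁻¹ := by
            gcongr
            exact_mod_cast (by omega : j - i ≤ 2*k)
        _ = 1 := ENNReal.mul_inv_cancel h2k0 h2ktop
    have hjen := ennreal_jensen ψ hψ.convex hψ.zero (Finset.Ico i j) (fun _ => c)
        (fun l => m * d (y (l+1)) (y l)) hwsum
    refine le_trans (le_trans (hψ.mono hquot) hjen) ?_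
    -- compare with G t
    set f : ℕ → ℝ≥0∞ := fun l =>
      (Ico ((((l:ℕ):ℝ)+1)/(n:ℝ) - h) ((((l:ℕ):ℝ)+1)/(n:ℝ))).indicator
        (fun _ => c * ψ (m * d (y (l+1)) (y l))) t with hf
    have hGt : G t = ∑ l ∈ Finset.range n, f l := by
      rw [hG, ← Fin.sum_univ_eq_sum_range]
      apply Finset.sum_congr rfl
      intro l _
      simp only [hf, hS, hD, hyx1 l, hyx2 l]
    rw [hGt]
    calc ∑ l ∈ Finset.Ico i j, c * ψ (m * d (y (l+1)) (y l))
        = ∑ l ∈ Finset.Ico i j, f l := by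
          apply Finset.sum_congr rfl
          intro l hl
          obtain ⟨hil, hlj⟩ := Finset.mem_Ico.mp hl
          have htS : t ∈ Ico ((((l:ℕ):ℝ)+1)/(n:ℝ) - h) ((((l:ℕ):ℝ)+1)/(n:ℝ)) := by
            constructor
            · have hlj' : ((l:ℕ):ℝ)+1 ≤ (j:ℝ) := by exact_mod_cast hlj
              rw [sub_le_iff_le_add, div_le_iff₀ hnpos]
              nlinarith
            · have hil' : (i:ℝ) ≤ ((l:ℕ):ℝ) := by exact_mod_cast hil
              rw [lt_div_iff₀ hnpos]
              nlinarith
          rw [hf]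
          simp only []
          rw [Set.indicator_of_mem htS]
      _ ≤ ∑ l ∈ Finset.range n, f l := by
          apply Finset.sum_le_sum_of_subset
          intro l hl
          rw [Finset.mem_range]
          have := (Finset.mem_Ico.mp hl).2
          omega
  -- integral estimate
  have hrestrict : ∫⁻ t in Icc (0:ℝ) (1-h), ψ (d (σ (t+h)) (σ t) / ENNReal.ofReal (2*h))
      = ∫⁻ t in Ico (0:ℝ) (1-h), ψ (d (σ (t+h)) (σ t) / ENNReal.ofReal (2*h)) :=
    (setLIntegral_congr Ico_ae_eq_Icc).symm
  rw [hrestrict]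
  have hch : c * ENNReal.ofReal h ≤ m⁻¹ := by
    have h1 : ENNReal.ofReal h ≤ ((2*k:ℕ):ℝ≥0∞) / m := by
      calc ENNReal.ofReal h ≤ ENNReal.ofReal (((2*k:ℕ):ℝ)/((n:ℕ):ℝ)) := by
            apply ENNReal.ofReal_le_ofReal
            rw [le_div_iff₀ hnpos]; push_cast; nlinarith
        _ = ENNReal.ofReal ((2*k:ℕ):ℝ) / ENNReal.ofReal ((n:ℕ):ℝ) :=
            ENNReal.ofReal_div_of_pos hnpos
        _ = ((2*k:ℕ):ℝ≥0∞) / m := by rw [ENNReal.ofReal_natCast, ENNReal.ofReal_natCast, hm]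
    calc c * ENNReal.ofReal h ≤ c * (((2*k:ℕ):ℝ≥0∞) / m) := by gcongr
      _ = m⁻¹ := by
          rw [hc, div_eq_mul_inv, ← mul_assoc, ENNReal.inv_mul_cancel h2k0 h2ktop, one_mul]
  calc ∫⁻ t in Ico (0:ℝ) (1-h), ψ (d (σ (t+h)) (σ t) / ENNReal.ofReal (2*h))
      ≤ ∫⁻ t in Ico (0:ℝ) (1-h), G t := setLIntegral_mono hGmeas stepA
    _ = ∑ l : Fin n, ∫⁻ t in Ico (0:ℝ) (1-h), (S l).indicator (fun _ => c * D l) t := by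
        rw [hG]
        exact lintegral_finset_sum _ fun l _ => measurable_const.indicator measurableSet_Ico
    _ ≤ ∑ l : Fin n, (c * D l) * ENNReal.ofReal h := by
        apply Finset.sum_le_sum
        intro l _
        rw [lintegral_indicator measurableSet_Ico, setLIntegral_const,
          Measure.restrict_apply measurableSet_Ico]
        calc (c * D l) * volume (S l ∩ Ico 0 (1-h))
            ≤ (c * D l) * volume (S l) := by gcongr; exact Set.inter_subset_left
          _ = (c * D l) * ENNReal.ofReal h := by
              rw [hS]
              simp only [Real.volume_Ico]
              ring_nf
    _ ≤ ∑ l : Fin n, m⁻¹ * D l := by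
        apply Finset.sum_le_sum
        intro l _
        calc c * D l * ENNReal.ofReal h = (c * ENNReal.ofReal h) * D l := by ring
          _ ≤ m⁻¹ * D l := by gcongr
    _ = ∑ j : Fin n, ((n : ℝ≥0∞))⁻¹ * ψ ((n : ℝ≥0∞) * d (x j.succ) (x j.castSucc)) := by
        apply Finset.sum_congr rfl
        intro l _
        rw [hD, hm]

theorem piecewise_constant_orlicz_estimate {X : Type*} (d : X → X → ℝ≥0∞)
    (hsymm : ∀ x y, d x y = d y x) (hrefl : ∀ x, d x x = 0)
    (htri : ∀ x y z, d x z ≤ d x y + d y z)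
    (ψ : ℝ≥0∞ → ℝ≥0∞) (hψ : IsOrlicz ψ)
    (N : ℕ) (x : Fin (2 ^ N + 1) → X) (σ : ℝ → X)
    (hσ : ∀ i : Fin (2 ^ N), ∀ t ∈ Ico (((i : ℕ) : ℝ) / 2 ^ N) ((((i : ℕ) : ℝ) + 1) / 2 ^ N),
      σ t = x i.castSucc)
    (h : ℝ) (hh1 : ((2 : ℝ) ^ N)⁻¹ ≤ h) (hh2 : h < 1) :
    ∫⁻ t in Icc (0 : ℝ) (1 - h), ψ (d (σ (t + h)) (σ t) / ENNReal.ofReal (2 * h)) ≤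
      ∑ j : Fin (2 ^ N), ((2 : ℝ≥0∞) ^ N)⁻¹ * ψ ((2 : ℝ≥0∞) ^ N * d (x j.succ) (x j.castSucc)) := by
  have hcastR : (((2^N : ℕ)):ℝ) = (2:ℝ)^N := by push_cast; ring
  have hcastE : (((2^N : ℕ)):ℝ≥0∞) = (2:ℝ≥0∞)^N := by push_cast; ring
  have main := orlicz_aux d hsymm hrefl htri ψ hψ (2^N) Nat.one_le_two_pow x σ
    (by intro i t ht; exact hσ i t (by rwa [hcastR] at ht))
    h (by rwa [hcastR]) hh2
  rw [hcastE] at main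
  exact main
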